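/- Let D be a bounded distributive lattice and m : D → [0,1] a classical finitely additive probability measure (monotone, m(0) = 0, m(1) = 1, m(a)+m(b) = m(a∨b)+m(a∧b)). Then ι° ∘ m : D → Γ is a Γ-valued measure. -/

import Mathlib

open scoped Classical

/-- The carrier of the "doubled unit interval" `Γ`: pairs `(r, b)` ordered
lexicographically, where `b = true` represents an exact value `r°`
(which must be rational) and `b = false` represents an approximation `r⁻`
(which must satisfy `r > 0`). -/
def GammaCarrier : Set (Lex (ℝ × Bool)) :=
  {p | 0 ≤ (ofLex p).1 ∧ (ofLex p).1 ≤ 1 ∧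
    ((ofLex p).2 = true → ∃ q : ℚ, (q : ℝ) = (ofLex p).1) ∧
    ((ofLex p).2 = false → 0 < (ofLex p).1)}

/-- The doubled unit interval `Γ`, with the (total) order inherited from the
lexicographic product: `r* < s*` iff `r < s`, and `q⁻ < q°` immediately. -/
abbrev Gamma : Type := {p : Lex (ℝ × Bool) // p ∈ GammaCarrier}

theorem mem_gammaCarrier {a : ℝ} {b : Bool} (h1 : 0 ≤ a) (h2 : a ≤ 1)
    (h3 : b = true → ∃ q : ℚ, (q : ℝ) = a) (h4 : b = false → 0 < a) :
    toLex (a, b) ∈ GammaCarrier := ⟨h1, h2, h3, h4⟩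

/-- The underlying real number of an element of `Γ` (the map `γ`). -/
def γmap (x : Gamma) : ℝ := (ofLex x.1).1

/-- An element of `Γ` is exact iff it is of `°`-type. -/
def gexact (x : Gamma) : Prop := (ofLex x.1).2 = true

theorem gmem (x : Gamma) : 0 ≤ (ofLex x.1).1 ∧ (ofLex x.1).1 ≤ 1 ∧
    ((ofLex x.1).2 = true → ∃ q : ℚ, (q : ℝ) = (ofLex x.1).1) ∧
    ((ofLex x.1).2 = false → 0 < (ofLex x.1).1) := x.2

/-- Smart constructor for `Γ`: clamps `r` into `[0,1]`, and produces the exact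
value `r°` if `e = true` and `r` is rational (or `r = 0`), and `r⁻` otherwise. -/
noncomputable def mk' (r : ℝ) (e : Bool) : Gamma :=
  if h : (e = true ∧ ∃ q : ℚ, (q : ℝ) = max 0 (min 1 r)) ∨ max 0 (min 1 r) = 0 then
    ⟨toLex (max 0 (min 1 r), true),
      mem_gammaCarrier (le_max_left 0 _) (max_le zero_le_one (min_le_left 1 r))
        (fun _ => h.elim (fun h' => h'.2) (fun h0 => ⟨0, by rw [h0]; norm_num⟩))
        (fun hc => absurd hc (by simp))⟩
  else
    ⟨toLex (max 0 (min 1 r), false),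
      mem_gammaCarrier (le_max_left 0 _) (max_le zero_le_one (min_le_left 1 r))
        (fun hc => absurd hc (by simp))
        (fun _ => lt_of_le_of_ne (le_max_left 0 _) (fun h0 => h (Or.inr h0.symm)))⟩

/-- `0°`, the bottom element of `Γ`. -/
noncomputable def gzero : Gamma := mk' 0 true
/-- `1°`, the top element of `Γ`. -/
noncomputable def gone : Gamma := mk' 1 true
/-- The section `ι° : [0,1] → Γ`, `r ↦ r°` for rational `r` and `r ↦ r⁻` otherwise. -/
noncomputable def icircR (r : ℝ) : Gamma := mk' r true
/-- The section `ι⁻ : [0,1] → Γ`, `0 ↦ 0°` and `r ↦ r⁻` for `r > 0`. -/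
noncomputable def iminusR (r : ℝ) : Gamma := mk' r false
/-- The exact value `q°` of a rational `q ∈ [0,1]`. -/
noncomputable def gq (q : ℚ) : Gamma := mk' (q : ℝ) true
/-- `ι°` as a map on the unit interval. -/
noncomputable def icirc (r : Set.Icc (0:ℝ) 1) : Gamma := icircR r.1
/-- `ι⁻` as a map on the unit interval. -/
noncomputable def iminusI (r : Set.Icc (0:ℝ) 1) : Gamma := iminusR r.1
/-- `γ : Γ → [0,1]` as a map into the unit interval. -/
noncomputable def gmapI (x : Gamma) : Set.Icc (0:ℝ) 1 := ⟨γmap x, (gmem x).1, (gmem x).2.1⟩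

/-- The partial subtraction `∸` on `Γ` (meaningful when `y ≤ x`):
`r° ∸ s° = (r−s)°`, `r⁻ ∸ s° = (r−s)⁻`, and `r* ∸ s⁻ = (r−s)°` if `r−s ∈ ℚ`,
`(r−s)⁻` otherwise. -/
noncomputable def gsub (x y : Gamma) : Gamma :=
  mk' (γmap x - γmap y)
    (if (gexact x ∧ gexact y) ∨ (¬ gexact y ∧ ∃ q : ℚ, (q : ℝ) = γmap x - γmap y)
      then true else false)

/-- The second partial subtraction `∸̃` on `Γ` (meaningful when `y ≤ x`):
`x ∸̃ x = 0°` and, for `y < x`, `r° ∸̃ s° = r⁻ ∸̃ s⁻ = r⁻ ∸̃ s° = (r−s)⁻` and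
`r° ∸̃ s⁻ = (r−s)°` if `r−s ∈ ℚ`, `(r−s)⁻` otherwise. -/
noncomputable def gsubt (x y : Gamma) : Gamma :=
  mk' (γmap x - γmap y)
    (if gexact x ∧ ¬ gexact y ∧ ∃ q : ℚ, (q : ℝ) = γmap x - γmap y then true else false)

/-- The partial addition `+` on `Γ` (meaningful when `x ≤ 1° ∸ y`):
`r° + s° = (r+s)°` and any sum involving a `⁻`-argument is of `⁻`-type. -/
noncomputable def gadd (x y : Gamma) : Gamma :=
  mk' (γmap x + γmap y) (if gexact x ∧ gexact y then true else false)

/-- A `Γ`-valued (finitely additive, probability) measure on a bounded lattice. -/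
def IsGMeasure {D : Type*} [Lattice D] [BoundedOrder D] (μ : D → Gamma) : Prop :=
  Monotone μ ∧ μ ⊥ = gzero ∧ μ ⊤ = gone ∧
  ∀ a b : D, gsubt (μ a) (μ (a ⊓ b)) ≤ gsub (μ (a ⊔ b)) (μ b) ∧
    gsubt (μ (a ⊔ b)) (μ b) ≤ gsub (μ a) (μ (a ⊓ b))

section Aux

lemma clamp_eq {r : ℝ} (h0 : 0 ≤ r) (h1 : r ≤ 1) : max 0 (min 1 r) = r := by
  rw [min_eq_right h1, max_eq_right h0]

lemma gamma_le_iff {x y : Gamma} :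
    x ≤ y ↔ (ofLex x.1).1 < (ofLex y.1).1 ∨
      ((ofLex x.1).1 = (ofLex y.1).1 ∧ (ofLex x.1).2 ≤ (ofLex y.1).2) := by
  rw [← Subtype.coe_le_coe]
  exact Prod.Lex.le_iff

lemma γmap_mk' (r : ℝ) (e : Bool) : γmap (mk' r e) = max 0 (min 1 r) := by
  unfold mk'; split <;> rfl

lemma mk'_congr {r s : ℝ} (e : Bool) (h : max 0 (min 1 r) = max 0 (min 1 s)) :
    mk' r e = mk' s e := by
  unfold mk'; simp only [h]

lemma mk'_false_le (r : ℝ) (e : Bool) : mk' r false ≤ mk' r e := by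
  unfold mk'
  by_cases hc : max 0 (min 1 r) = 0
  · rw [dif_pos (Or.inr hc), dif_pos (Or.inr hc)]
  · rw [dif_neg (by simp [hc])]
    split
    · exact gamma_le_iff.mpr (Or.inr ⟨rfl, by simp⟩)
    · exact le_refl _

lemma icircR_mono {r s : ℝ} (h : r ≤ s) : icircR r ≤ icircR s := by
  unfold icircR
  rcases lt_or_eq_of_le (max_le_max (le_refl (0:ℝ)) (min_le_min (le_refl (1:ℝ)) h)) with hlt | heq
  · apply gamma_le_iff.mpr; left
    rwa [show (ofLex (mk' r true).1).1 = γmap (mk' r true) from rfl,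
      show (ofLex (mk' s true).1).1 = γmap (mk' s true) from rfl, γmap_mk', γmap_mk']
  · exact le_of_eq (mk'_congr true heq)

lemma γmap_icircR {r : ℝ} (h0 : 0 ≤ r) (h1 : r ≤ 1) : γmap (icircR r) = r := by
  rw [icircR, γmap_mk', clamp_eq h0 h1]

lemma gexact_icircR {r : ℝ} (h0 : 0 ≤ r) (h1 : r ≤ 1) (h : gexact (icircR r)) :
    ∃ q : ℚ, (q : ℝ) = r := by
  unfold icircR mk' at h
  split at h
  · next hc =>
      rcases hc with ⟨_, q, hq⟩ | hz
      · exact ⟨q, by rwa [clamp_eq h0 h1] at hq⟩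
      · exact ⟨0, by rw [clamp_eq h0 h1] at hz; simpa using hz.symm⟩
  · exact absurd h (by simp [gexact])

end Aux

/-- if `m : D → [0,1]` is a classical finitely additive
probability measure on a bounded distributive lattice `D`, then
`ι° ∘ m : D → Γ` is a `Γ`-valued measure. -/
theorem stmt_14 {D : Type*} [DistribLattice D] [BoundedOrder D]
    (m : D → ℝ) (h1 : Monotone m) (h2 : m ⊥ = 0) (h3 : m ⊤ = 1)
    (h4 : ∀ a b : D, m a + m b = m (a ⊔ b) + m (a ⊓ b)) :
    IsGMeasure (fun a => icircR (m a)) := by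
  have hm0 : ∀ a : D, 0 ≤ m a := fun a => h2 ▸ h1 bot_le
  have hm1 : ∀ a : D, m a ≤ 1 := fun a => h3 ▸ h1 le_top
  have key : ∀ a b : D,
      gsubt (icircR (m a)) (icircR (m (a ⊓ b))) ≤ gsub (icircR (m (a ⊔ b))) (icircR (m b)) := by
    intro a b
    have hP : ¬ (gexact (icircR (m a)) ∧ ¬ gexact (icircR (m (a ⊓ b))) ∧
        ∃ q : ℚ, (q : ℝ) = γmap (icircR (m a)) - γmap (icircR (m (a ⊓ b)))) := by
      rintro ⟨hx, hy, q, hq⟩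
      obtain ⟨qa, hqa⟩ := gexact_icircR (hm0 a) (hm1 a) hx
      apply hy
      unfold icircR mk'
      rw [dif_pos (Or.inl ⟨rfl, qa - q, by
        rw [clamp_eq (hm0 _) (hm1 _)]
        rw [γmap_icircR (hm0 a) (hm1 a), γmap_icircR (hm0 _) (hm1 _)] at hq
        push_cast
        linarith⟩)]
      rfl
    have hd : γmap (icircR (m a)) - γmap (icircR (m (a ⊓ b)))
        = γmap (icircR (m (a ⊔ b))) - γmap (icircR (m b)) := by
      rw [γmap_icircR (hm0 a) (hm1 a), γmap_icircR (hm0 (a ⊓ b)) (hm1 (a ⊓ b)),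
        γmap_icircR (hm0 (a ⊔ b)) (hm1 (a ⊔ b)), γmap_icircR (hm0 b) (hm1 b)]
      have := h4 a b; linarith
    unfold gsubt
    rw [if_neg hP, hd]
    exact mk'_false_le _ _
  refine ⟨fun a b hab => icircR_mono (h1 hab), ?_, ?_, fun a b => ⟨key a b, ?_⟩⟩
  · show icircR (m ⊥) = gzero
    rw [h2]; rfl
  · show icircR (m ⊤) = gone
    rw [h3]; rfl
  · -- second inequality: swap roles using a ⊔ b and b
    have hP : ¬ (gexact (icircR (m (a ⊔ b))) ∧ ¬ gexact (icircR (m b)) ∧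
        ∃ q : ℚ, (q : ℝ) = γmap (icircR (m (a ⊔ b))) - γmap (icircR (m b))) := by
      rintro ⟨hx, hy, q, hq⟩
      obtain ⟨qa, hqa⟩ := gexact_icircR (hm0 _) (hm1 _) hx
      apply hy
      unfold icircR mk'
      rw [dif_pos (Or.inl ⟨rfl, qa - q, by
        rw [clamp_eq (hm0 _) (hm1 _)]
        rw [γmap_icircR (hm0 _) (hm1 _), γmap_icircR (hm0 b) (hm1 b)] at hq
        push_cast
        linarith⟩)]
      rfl
    have hd : γmap (icircR (m (a ⊔ b))) - γmap (icircR (m b))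
        = γmap (icircR (m a)) - γmap (icircR (m (a ⊓ b))) := by
      rw [γmap_icircR (hm0 (a ⊔ b)) (hm1 (a ⊔ b)), γmap_icircR (hm0 b) (hm1 b),
        γmap_icircR (hm0 a) (hm1 a), γmap_icircR (hm0 (a ⊓ b)) (hm1 (a ⊓ b))]
      have := h4 a b; linarith
    unfold gsubt
    rw [if_neg hP, hd]
    exact mk'_false_le _ _
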